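/- Let G and G' be two realisations of the same bipartite degree sequence S with |E(G) △ E(G')| = 4. Then there exist distinct v, v' ∈ V and distinct u, u' ∈ U such that E(G) \ E(G') = {(v,u), (v',u')} and E(G') \ E(G) = {(v,u'), (v',u)}; that is, the symmetric difference forms a vertex-disjoint alternating 4-cycle. -/
import Mathlib


/-- `E ⊆ V × U` is a realisation of the bipartite degree sequence `(a, b)`:
vertex `i` of the first part has degree `a i`, vertex `j` of the second part degree `b j`. -/
def IsRealisation {n n' : ℕ} (a : Fin n → ℕ) (b : Fin n' → ℕ)
    (E : Finset (Fin n × Fin n')) : Prop :=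
  (∀ i : Fin n, (E.filter fun p => p.1 = i).card = a i) ∧
  (∀ j : Fin n', (E.filter fun p => p.2 = j).card = b j)

/-- An `F`-fixed realisation: a realisation containing all fixed edges `FE`
and none of the fixed non-edges `FN`. -/
def IsFFixedRealisation {n n' : ℕ} (a : Fin n → ℕ) (b : Fin n' → ℕ)
    (FE FN E : Finset (Fin n × Fin n')) : Prop :=
  IsRealisation a b E ∧ FE ⊆ E ∧ FN ∩ E = ∅

lemma filter_sdiff_card_eq {α : Type*} [DecidableEq α] (s t : Finset α) (P : α → Prop)
    [DecidablePred P] (h : (s.filter P).card = (t.filter P).card) :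
    ((s \ t).filter P).card = ((t \ s).filter P).card := by
  have key : ∀ u v : Finset α, (u.filter P).card
      = ((u ∩ v).filter P).card + ((u \ v).filter P).card := by
    intro u v
    rw [← Finset.card_union_of_disjoint, ← Finset.filter_union, Finset.union_comm,
      Finset.sdiff_union_inter]
    exact Finset.disjoint_filter_filter
      ((Finset.sdiff_disjoint.mono_right Finset.inter_subset_right).symm)
  have h1 := key s t
  have h2 := key t s
  rw [Finset.inter_comm t s] at h2
  omega

lemma pair_filter_card {α : Type*} [DecidableEq α] (p q : α) (hpq : p ≠ q) (P : α → Prop)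
    [DecidablePred P] :
    (({p, q} : Finset α).filter P).card
      = (if P p then 1 else 0) + (if P q then 1 else 0) := by
  rw [Finset.filter_insert, Finset.filter_singleton]
  split_ifs <;> simp [hpq]


lemma two_of {c d : Prop} [Decidable c] [Decidable d]
    (h : (if c then (1:ℕ) else 0) + (if d then 1 else 0) = 2) : c ∧ d := by
  split_ifs at h <;> first | tauto | omega

lemma one_of {c d : Prop} [Decidable c] [Decidable d]
    (h : (if c then (1:ℕ) else 0) + (if d then 1 else 0) = 1) :
    (c ∧ ¬d) ∨ (¬c ∧ d) := by
  split_ifs at h <;> first | tauto | omega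

lemma ge_one_of {d e f : Prop} [Decidable d] [Decidable e] [Decidable f]
    (h : 1 + (if d then (1:ℕ) else 0) = (if e then 1 else 0) + (if f then 1 else 0)) :
    e ∨ f := by
  split_ifs at h <;> first | tauto | omega

/-- if `G` and `G'` are realisations of the same bipartite degree
sequence with `|E(G) △ E(G')| = 4`, then the symmetric difference is a
vertex-disjoint alternating 4-cycle: there are distinct `v, v'` and distinct
`u, u'` with `G \ G' = {(v,u), (v',u')}` and `G' \ G = {(v,u'), (v',u)}`. -/
theorem stmt14 {n n' : ℕ} (a : Fin n → ℕ) (b : Fin n' → ℕ)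
    (G G' : Finset (Fin n × Fin n'))
    (hG : IsRealisation a b G) (hG' : IsRealisation a b G')
    (hcard : (symmDiff G G').card = 4) :
    ∃ (v v' : Fin n) (u u' : Fin n'), v ≠ v' ∧ u ≠ u' ∧
      G \ G' = {(v, u), (v', u')} ∧ G' \ G = {(v, u'), (v', u)} := by
  obtain ⟨ha, hb⟩ := hG
  obtain ⟨ha', hb'⟩ := hG'
  -- |G| = |G'|
  have hGG' : G.card = G'.card := by
    rw [Finset.card_eq_sum_card_fiberwise (f := Prod.fst) (t := Finset.univ)
        (fun x _ => Finset.mem_univ _),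
      Finset.card_eq_sum_card_fiberwise (s := G') (f := Prod.fst) (t := Finset.univ)
        (fun x _ => Finset.mem_univ _)]
    exact Finset.sum_congr rfl fun i _ => by rw [ha i, ha' i]
  have hS : symmDiff G G' = (G \ G') ∪ (G' \ G) := by rw [symmDiff_def]; rfl
  have hdisj : Disjoint (G \ G') (G' \ G) := disjoint_sdiff_sdiff
  rw [hS, Finset.card_union_of_disjoint hdisj] at hcard
  have hDD' : (G \ G').card = (G' \ G).card := by
    have h1 := Finset.card_sdiff_add_card_inter G G'
    have h2 := Finset.card_sdiff_add_card_inter G' G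
    rw [Finset.inter_comm] at h2
    omega
  have hD2 : (G \ G').card = 2 := by omega
  have hD'2 : (G' \ G).card = 2 := by omega
  obtain ⟨p, q, hpq, hD⟩ := Finset.card_eq_two.mp hD2
  obtain ⟨r, s, hrs, hD'⟩ := Finset.card_eq_two.mp hD'2
  -- disjointness in component form
  have key : ∀ x y : Fin n × Fin n', x ∈ G \ G' → y ∈ G' \ G → ¬(y.1 = x.1 ∧ y.2 = x.2) := by
    rintro x y hx hy ⟨h1, h2⟩
    have hyx : y = x := Prod.ext h1 h2
    exact Finset.disjoint_left.mp hdisj hx (hyx ▸ hy)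
  have hpD : p ∈ G \ G' := by rw [hD]; simp
  have hqD : q ∈ G \ G' := by rw [hD]; simp
  have hrD : r ∈ G' \ G := by rw [hD']; simp
  have hsD : s ∈ G' \ G := by rw [hD']; simp
  have hpr := key p r hpD hrD
  have hps := key p s hpD hsD
  have hqr := key q r hqD hrD
  have hqs := key q s hqD hsD
  -- row and column count equalities
  have hrow : ∀ i : Fin n, (if p.1 = i then (1:ℕ) else 0) + (if q.1 = i then 1 else 0)
      = (if r.1 = i then 1 else 0) + (if s.1 = i then 1 else 0) := by
    intro i
    have h := filter_sdiff_card_eq G G' (fun x => x.1 = i) (by rw [ha i, ha' i])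
    rw [hD, hD'] at h
    rw [pair_filter_card p q hpq, pair_filter_card r s hrs] at h
    simpa using h
  have hcol : ∀ j : Fin n', (if p.2 = j then (1:ℕ) else 0) + (if q.2 = j then 1 else 0)
      = (if r.2 = j then 1 else 0) + (if s.2 = j then 1 else 0) := by
    intro j
    have h := filter_sdiff_card_eq G G' (fun x => x.2 = j) (by rw [hb j, hb' j])
    rw [hD, hD'] at h
    rw [pair_filter_card p q hpq, pair_filter_card r s hrs] at h
    simpa using h
  -- p.1 ≠ q.1
  have hne1 : p.1 ≠ q.1 := by
    intro hq
    have h1 := hrow p.1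
    rw [if_pos rfl, if_pos hq.symm] at h1
    obtain ⟨hr1, hs1⟩ := two_of (h1.symm.trans (by norm_num))
    have h3 := hcol p.2
    rw [if_pos rfl] at h3
    rcases ge_one_of h3 with hc | hc
    · exact hpr ⟨hr1, hc⟩
    · exact hps ⟨hs1, hc⟩
  have hne2 : p.2 ≠ q.2 := by
    intro hq
    have h1 := hcol p.2
    rw [if_pos rfl, if_pos hq.symm] at h1
    obtain ⟨hr1, hs1⟩ := two_of (h1.symm.trans (by norm_num))
    have h3 := hrow p.1
    rw [if_pos rfl] at h3
    rcases ge_one_of h3 with hc | hc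
    · exact hpr ⟨hc, hr1⟩
    · exact hps ⟨hc, hs1⟩
  -- main structure
  have h1 := hrow p.1
  have h2 := hrow q.1
  have h3 := hcol p.2
  have h4 := hcol q.2
  rw [if_pos rfl, if_neg (fun h => hne1 h.symm)] at h1
  rw [if_pos rfl, if_neg hne1] at h2
  rw [if_pos rfl, if_neg (fun h => hne2 h.symm)] at h3
  rw [if_pos rfl, if_neg hne2] at h4
  have A1 := one_of (h1.symm.trans (by norm_num))
  have A2 := one_of (h2.symm.trans (by norm_num))
  have C1 := one_of (h3.symm.trans (by norm_num))
  have C2 := one_of (h4.symm.trans (by norm_num))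
  have hh1 : ¬(r.1 = p.1 ∧ r.1 = q.1) := fun ⟨x, y⟩ => hne1 (x.symm.trans y)
  have hh2 : ¬(s.1 = p.1 ∧ s.1 = q.1) := fun ⟨x, y⟩ => hne1 (x.symm.trans y)
  have hh3 : ¬(r.2 = p.2 ∧ r.2 = q.2) := fun ⟨x, y⟩ => hne2 (x.symm.trans y)
  have hh4 : ¬(s.2 = p.2 ∧ s.2 = q.2) := fun ⟨x, y⟩ => hne2 (x.symm.trans y)
  have claim : (r.1 = p.1 ∧ r.2 = q.2 ∧ s.1 = q.1 ∧ s.2 = p.2)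
      ∨ (r.1 = q.1 ∧ r.2 = p.2 ∧ s.1 = p.1 ∧ s.2 = q.2) := by
    rcases A1 with ⟨u1, u2⟩ | ⟨u1, u2⟩ <;> rcases A2 with ⟨w1, w2⟩ | ⟨w1, w2⟩ <;>
      rcases C1 with ⟨x1, x2⟩ | ⟨x1, x2⟩ <;> rcases C2 with ⟨y1, y2⟩ | ⟨y1, y2⟩ <;>
      first
      | exact Or.inl ⟨‹r.1 = p.1›, ‹r.2 = q.2›, ‹s.1 = q.1›, ‹s.2 = p.2›⟩
      | exact Or.inr ⟨‹r.1 = q.1›, ‹r.2 = p.2›, ‹s.1 = p.1›, ‹s.2 = q.2›⟩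
      | exact absurd ⟨‹r.1 = p.1›, ‹r.1 = q.1›⟩ hh1
      | exact absurd ⟨‹s.1 = p.1›, ‹s.1 = q.1›⟩ hh2
      | exact absurd ⟨‹r.2 = p.2›, ‹r.2 = q.2›⟩ hh3
      | exact absurd ⟨‹s.2 = p.2›, ‹s.2 = q.2›⟩ hh4
      | exact absurd ⟨‹r.1 = p.1›, ‹r.2 = p.2›⟩ hpr
      | exact absurd ⟨‹s.1 = p.1›, ‹s.2 = p.2›⟩ hps
      | exact absurd ⟨‹r.1 = q.1›, ‹r.2 = q.2›⟩ hqr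
      | exact absurd ⟨‹s.1 = q.1›, ‹s.2 = q.2›⟩ hqs
  refine ⟨p.1, q.1, p.2, q.2, hne1, hne2, ?_, ?_⟩
  · rw [hD]
  · rcases claim with ⟨c1, c2, c3, c4⟩ | ⟨c1, c2, c3, c4⟩
    · have hr : r = (p.1, q.2) := Prod.ext c1 c2
      have hs : s = (q.1, p.2) := Prod.ext c3 c4
      rw [hD', hr, hs]
    · have hr : r = (q.1, p.2) := Prod.ext c1 c2
      have hs : s = (p.1, q.2) := Prod.ext c3 c4
      rw [hD', hr, hs, Finset.pair_comm]
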